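/- arXiv:2010.15660 — 4 statements merged into one kernel-verified Lean document; each statement's English description precedes it below -/
import Mathlib

section
/- For every x₀ with 0 < x₀ < 1/2, the image of ℬ under the evaluation map f ↦ f(x₀, ·) ∈ C(𝕋, M₂(ℂ)) is exactly the fixed-point C*-algebra 𝒟 = {g ∈ C(𝕋, M₂(ℂ)) : g(z) = W g(−z) W* for all z ∈ 𝕋}, and the kernel of this map is {f ∈ ℬ : f(x₀, z) = 0 for all z ∈ 𝕋}. (In the paper, 𝒟 is identified with the crossed product C(𝕋) ⋊ ℤ₂, so that the fiber of CAR₁ at x₀ ∈ (0, 1/2) is C(𝕋) ⋊ ℤ₂.) -/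
open Complex Matrix

noncomputable section

abbrev TT : Type := Metric.sphere (0:ℂ) 1
abbrev Kspace : Type := Set.Icc (0:ℝ) (1/2) × TT
abbrev M2 : Type := Matrix (Fin 2) (Fin 2) ℂ

def Wmat : M2 := !![1, 0; 0, -1]
def WzMat (z : ℂ) : M2 := !![1, 0; 0, z]
def Vmat : M2 := (Real.sqrt 2 : ℂ)⁻¹ • !![1, 1; 1, -1]

def x0 : Set.Icc (0:ℝ) (1/2) := ⟨0, by norm_num⟩
def xhalf : Set.Icc (0:ℝ) (1/2) := ⟨1/2, by norm_num⟩
def ptOne : TT := ⟨1, by simp⟩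

def Bset : Set C(Kspace, M2) :=
  {f | (∀ x : Set.Icc (0:ℝ) (1/2), 0 < (x : ℝ) →
          ∀ z : TT, f (x, z) = Wmat * f (x, -z) * star Wmat)
     ∧ (∀ z : TT, f (x0, z) = WzMat z * f (x0, ptOne) * star (WzMat z))
     ∧ (∀ z : TT, (star Vmat * f (xhalf, z) * Vmat).IsDiag)}

/-- Evaluation (restriction) of `f` at the fiber over `x`, as an element of `C(𝕋, M₂(ℂ))`. -/
def resAt (x : Set.Icc (0:ℝ) (1/2)) (f : C(Kspace, M2)) : C(TT, M2) :=
  f.comp ⟨fun z => (x, z), by fun_prop⟩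

/-- The fixed-point algebra 𝒟 = {g : g(z) = W g(−z) W*} ≅ C(𝕋) ⋊ ℤ₂. -/
def Dset : Set C(TT, M2) :=
  {g | ∀ z : TT, g z = Wmat * g (-z) * star Wmat}

theorem stmt3 (x : Set.Icc (0:ℝ) (1/2)) (hx0 : 0 < (x : ℝ)) (hx1 : (x : ℝ) < 1/2) :
    (resAt x '' Bset = Dset) ∧
    (∀ f ∈ Bset, (resAt x f = 0 ↔ ∀ z : TT, f (x, z) = 0)) := by
  have hxne : (x : ℝ) ≠ 0 := ne_of_gt hx0
  have hhalf : (0:ℝ) < 1/2 - (x : ℝ) := by linarith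
  constructor
  · ext g
    constructor
    · rintro ⟨f, hf, rfl⟩ z
      exact hf.1 x hx0 z
    · intro hg
      set φ : ℝ → ℝ := fun t => min (t / (x:ℝ)) ((1/2 - t)/(1/2 - (x:ℝ))) with hφ
      have hφc : Continuous φ := by
        apply Continuous.min
        · exact continuous_id.div_const _
        · exact (continuous_const.sub continuous_id).div_const _
      have hcont : Continuous fun p : Kspace => ((φ (p.1 : ℝ) : ℝ) : ℂ) • g p.2 := by
        refine Continuous.smul (f := fun p : Kspace => ((φ (p.1 : ℝ) : ℝ) : ℂ)) (g := fun p : Kspace => g p.2) ?_ ?_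
        · exact Complex.continuous_ofReal.comp (hφc.comp (continuous_subtype_val.comp continuous_fst))
        · exact g.continuous.comp continuous_snd
      have hφ0 : φ 0 = 0 := by
        simp only [hφ]
        rw [zero_div]
        exact min_eq_left (by positivity)
      have hφh : φ (1/2) = 0 := by
        simp only [hφ]
        rw [show (1/2 - 1/2 : ℝ) = 0 by norm_num, zero_div]
        exact min_eq_right (by positivity)
      have hφx : φ (x:ℝ) = 1 := by
        simp only [hφ]
        rw [div_self hxne, div_self (ne_of_gt hhalf), min_self]
      refine ⟨⟨fun p => ((φ (p.1 : ℝ) : ℝ) : ℂ) • g p.2, hcont⟩, ⟨?_, ?_, ?_⟩, ?_⟩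
      · intro t ht z
        simp only [ContinuousMap.coe_mk]
        rw [hg z, Matrix.mul_smul, Matrix.smul_mul]
      · intro z
        simp only [ContinuousMap.coe_mk]
        have : ((x0 : Set.Icc (0:ℝ) (1/2)) : ℝ) = 0 := rfl
        rw [this, hφ0]
        simp
      · intro z
        simp only [ContinuousMap.coe_mk]
        have : ((xhalf : Set.Icc (0:ℝ) (1/2)) : ℝ) = 1/2 := rfl
        rw [this, hφh]
        simp
      · ext z
        simp [resAt, hφx]
  · intro f hf
    constructor
    · intro h z
      have := ContinuousMap.ext_iff.mp h z
      simpa [resAt] using this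
    · intro h
      refine ContinuousMap.ext fun z => ?_
      simpa [resAt] using h z
end
end

section
/- The map φ : ℬ → C(𝕋) sending f to the function z ↦ (V* f(1/2, z) V)₁₁ (the (1,1)-entry of the diagonal matrix V* f(1/2, z) V) is a surjective unital *-algebra homomorphism onto C(𝕋), and its kernel equals {f ∈ ℬ : f(1/2, z) = 0 for all z ∈ 𝕋}. Consequently, the fiber of ℬ at x = 1/2 is *-isomorphic to C(𝕋). -/
open Complex Matrix

noncomputable section

/-- The map φ : f ↦ (z ↦ (V* f(1/2, z) V)₁₁) ∈ C(𝕋). -/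
def phiHalf (f : C(Kspace, M2)) : C(TT, ℂ) :=
  ⟨fun z => (star Vmat * f (xhalf, z) * Vmat) 0 0, by
    have h : Continuous fun z : TT => f (xhalf, z) :=
      f.continuous.comp (by fun_prop)
    exact ((continuous_const.matrix_mul h).matrix_mul continuous_const).matrix_elem 0 0⟩

lemma sq2 : ((Real.sqrt 2 : ℂ))⁻¹ * ((Real.sqrt 2 : ℂ))⁻¹ = 1/2 := by
  rw [← mul_inv, ← Complex.ofReal_mul, Real.mul_self_sqrt (by norm_num)]
  norm_num

lemma starV : star Vmat = Vmat := by
  ext i j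
  fin_cases i <;> fin_cases j <;>
    simp [Vmat, Matrix.star_apply, Matrix.smul_apply]

lemma starW : star Wmat = Wmat := by
  ext i j
  fin_cases i <;> fin_cases j <;> simp [Wmat, Matrix.star_apply]

lemma VV : Vmat * Vmat = 1 := by
  ext i j
  fin_cases i <;> fin_cases j <;>
    simp [Vmat, Matrix.mul_apply, Fin.sum_univ_two, Matrix.one_apply] <;>
    · ring_nf
      rw [sq, sq2]; norm_num

lemma conj_entry (B : M2) :
    (Vmat * (Wmat * B * star Wmat) * Vmat) 1 1 = (Vmat * B * Vmat) 0 0 := by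
  rw [starW]
  simp [Vmat, Wmat, Matrix.mul_apply, Matrix.vecMul, dotProduct,
    Fin.sum_univ_two, Matrix.smul_apply]
  ring

lemma VABV (A B : M2) :
    Vmat * (A * B) * Vmat = (Vmat * A * Vmat) * (Vmat * B * Vmat) := by
  calc Vmat * (A * B) * Vmat = Vmat * A * (Vmat * Vmat) * (B * Vmat) := by
        rw [VV]; noncomm_ring
    _ = (Vmat * A * Vmat) * (Vmat * B * Vmat) := by noncomm_ring

lemma sandwich (A : M2) : Vmat * (Vmat * A * Vmat) * Vmat = A := by
  calc Vmat * (Vmat * A * Vmat) * Vmat = (Vmat * Vmat) * A * (Vmat * Vmat) := by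
        noncomm_ring
    _ = A := by rw [VV]; simp

def mkF (h : C(TT, ℂ)) : C(Kspace, M2) :=
  ⟨fun p => (((p.1 : ℝ) : ℂ)) •
      !![h p.2 + h (-p.2), h p.2 - h (-p.2); h p.2 - h (-p.2), h p.2 + h (-p.2)], by
    have hc : Continuous fun p : Kspace => ((p.1 : ℝ) : ℂ) := by fun_prop
    have hn : Continuous fun p : Kspace => h (-p.2) := by fun_prop
    have hp : Continuous fun p : Kspace => h p.2 := by fun_prop
    apply hc.smul
    refine continuous_matrix fun i j => ?_
    fin_cases i <;> fin_cases j <;> simp <;> fun_prop⟩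

lemma phiHalf_apply (f : C(Kspace, M2)) (z : TT) :
    phiHalf f z = (Vmat * f (xhalf, z) * Vmat) 0 0 := by
  simp [phiHalf, starV]

theorem stmt4 :
    (∀ f ∈ Bset, ∀ g ∈ Bset, phiHalf (f * g) = phiHalf f * phiHalf g) ∧
    (∀ f ∈ Bset, ∀ g ∈ Bset, phiHalf (f + g) = phiHalf f + phiHalf g) ∧
    (∀ (c : ℂ), ∀ f ∈ Bset, phiHalf (c • f) = c • phiHalf f) ∧
    phiHalf 1 = 1 ∧
    (∀ f ∈ Bset, phiHalf (star f) = star (phiHalf f)) ∧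
    (∀ h : C(TT, ℂ), ∃ f ∈ Bset, phiHalf f = h) ∧
    (∀ f ∈ Bset, (phiHalf f = 0 ↔ ∀ z : TT, f (xhalf, z) = 0)) := by
  refine ⟨?_, ?_, ?_, ?_, ?_, ?_, ?_⟩
  · -- multiplicative
    intro f hf g hg
    ext z
    have hd : (Vmat * f (xhalf, z) * Vmat).IsDiag := by
      have := hf.2.2 z; rwa [starV] at this
    have h01 : (Vmat * f (xhalf, z) * Vmat) 0 1 = 0 := hd (by decide)
    rw [ContinuousMap.mul_apply, phiHalf_apply, phiHalf_apply, phiHalf_apply,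
      ContinuousMap.mul_apply, VABV]
    rw [Matrix.mul_apply, Fin.sum_univ_two, h01]
    ring
  · -- additive
    intro f hf g hg
    ext z
    simp [phiHalf_apply, ContinuousMap.add_apply, Matrix.mul_add, Matrix.add_mul,
      Matrix.add_apply]
  · -- scalar
    intro c f hf
    ext z
    simp [phiHalf_apply, ContinuousMap.smul_apply, mul_smul_comm, smul_mul_assoc,
      Matrix.smul_apply]
  · -- unital
    ext z
    simp [phiHalf_apply, ContinuousMap.one_apply, VV, Matrix.one_apply]
  · -- star
    intro f hf
    ext z
    have h1 : star (Vmat * f (xhalf, z) * Vmat)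
        = Vmat * star (f (xhalf, z)) * Vmat := by
      rw [Matrix.star_mul, Matrix.star_mul, starV]; noncomm_ring
    rw [ContinuousMap.star_apply, phiHalf_apply, phiHalf_apply,
      ContinuousMap.star_apply, ← h1, Matrix.star_apply]
  · -- surjective
    intro h
    refine ⟨mkF h, ⟨?_, ?_, ?_⟩, ?_⟩
    · intro x hx z
      rw [starW]
      ext i j
      fin_cases i <;> fin_cases j <;>
        simp [mkF, Wmat, Matrix.mul_apply, Matrix.vecMul, dotProduct,
          Fin.sum_univ_two, Matrix.smul_apply, neg_neg] <;> (first | ring1 | exact Or.inl (by ring))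
    · intro z
      have h0 : ((x0 : ℝ) : ℂ) = 0 := by simp [x0]
      simp [mkF, h0]
      ext i j
      fin_cases i <;> fin_cases j <;>
        simp [WzMat, Matrix.mul_apply, Matrix.vecMul, dotProduct,
          Fin.sum_univ_two]
    · intro z
      rw [starV]
      intro i j hij
      fin_cases i <;> fin_cases j
      · exact absurd rfl hij
      · simp [mkF, Vmat, Matrix.mul_apply, Matrix.vecMul, dotProduct,
          Fin.sum_univ_two, Matrix.smul_apply]
        ring
      · simp [mkF, Vmat, Matrix.mul_apply, Matrix.vecMul, dotProduct,
          Fin.sum_univ_two, Matrix.smul_apply]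
        ring
      · exact absurd rfl hij
    · ext z
      rw [phiHalf_apply]
      have hx : ((xhalf : ℝ) : ℂ) = 1/2 := by norm_num [xhalf]
      simp [mkF, Vmat, Matrix.mul_apply, Matrix.vecMul, dotProduct,
        Fin.sum_univ_two, Matrix.smul_apply, hx]
      ring_nf
      rw [sq, sq2]
      ring
  · -- kernel
    intro f hf
    constructor
    · intro h0 z
      have hAeq := hf.1 xhalf (by norm_num [xhalf]) z
      have hd : (Vmat * f (xhalf, z) * Vmat).IsDiag := by
        have := hf.2.2 z; rwa [starV] at this
      have e0 : (Vmat * f (xhalf, z) * Vmat) 0 0 = 0 := by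
        have := ContinuousMap.congr_fun h0 z
        rwa [phiHalf_apply] at this
      have e0' : (Vmat * f (xhalf, -z) * Vmat) 0 0 = 0 := by
        have := ContinuousMap.congr_fun h0 (-z)
        rwa [phiHalf_apply] at this
      have e1 : (Vmat * f (xhalf, z) * Vmat) 1 1 = 0 := by
        rw [hAeq, conj_entry]; exact e0'
      have hD : Vmat * f (xhalf, z) * Vmat = 0 := by
        ext i j
        fin_cases i <;> fin_cases j
        · simpa using e0
        · simpa using hd (show (0:Fin 2) ≠ 1 by decide)
        · simpa using hd (show (1:Fin 2) ≠ 0 by decide)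
        · simpa using e1
      calc f (xhalf, z) = Vmat * (Vmat * f (xhalf, z) * Vmat) * Vmat :=
            (sandwich _).symm
        _ = 0 := by rw [hD]; simp
    · intro hz
      ext z
      rw [phiHalf_apply, hz z]
      simp
end
end

section
/- With respect to the twisted product ⋆ (twist by Θ/2) the elements a₁, …, aₙ satisfy the Θ-deformed CAR relations: a_i* ⋆ a_i + a_i ⋆ a_i* = 1 for all i; a_i* ⋆ a_j = e^{2πiΘ_{i,j}} a_j ⋆ a_i* for all i ≠ j; and a_i ⋆ a_j = e^{−2πiΘ_{i,j}} a_j ⋆ a_i for all i ≠ j. (This is the computation showing that the generators of CAR_Θ map to the generators of the Rieffel deformation (CAR₁^{⊗n})^{Θ/2}.) -/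
open Complex Matrix

noncomputable section

/-- `⟨Θ(p), q⟩ = Σ_l (Θp)_l q_l`. -/
def pairTheta {n : ℕ} (Θ : Matrix (Fin n) (Fin n) ℝ) (p q : Fin n → ℤ) : ℝ :=
  ∑ l, (∑ j, Θ l j * (p j : ℝ)) * (q l : ℝ)

/-- The `i`-th standard basis vector of `ℤⁿ`. -/
def deltaVec {n : ℕ} (i : Fin n) : Fin n → ℤ := fun j => if j = i then 1 else 0

lemma pT_nd {n : ℕ} (Θ : Matrix (Fin n) (Fin n) ℝ) (i j : Fin n) :
    pairTheta Θ (-deltaVec i) (deltaVec j) = -Θ j i := by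
  simp [pairTheta, deltaVec, Finset.sum_ite_eq', mul_ite]

lemma pT_dn {n : ℕ} (Θ : Matrix (Fin n) (Fin n) ℝ) (i j : Fin n) :
    pairTheta Θ (deltaVec i) (-deltaVec j) = -Θ j i := by
  simp [pairTheta, deltaVec, Finset.sum_ite_eq', mul_ite]

lemma pT_dd {n : ℕ} (Θ : Matrix (Fin n) (Fin n) ℝ) (i j : Fin n) :
    pairTheta Θ (deltaVec i) (deltaVec j) = Θ j i := by
  simp [pairTheta, deltaVec, Finset.sum_ite_eq', mul_ite]

theorem stmt7 {n : ℕ} (Θ : Matrix (Fin n) (Fin n) ℝ) (hΘ : Θᵀ = -Θ)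
    (A : Type*) [Ring A] [Algebra ℂ A] [StarRing A] [StarModule ℂ A]
    -- the ℤⁿ-grading
    (𝒜 : (Fin n → ℤ) → Submodule ℂ A)
    (hdirect : DirectSum.IsInternal 𝒜)
    (hgmul : ∀ (p q : Fin n → ℤ), ∀ a ∈ 𝒜 p, ∀ b ∈ 𝒜 q, a * b ∈ 𝒜 (p + q))
    (hgone : (1 : A) ∈ 𝒜 0)
    (hgstar : ∀ (p : Fin n → ℤ), ∀ a ∈ 𝒜 p, star a ∈ 𝒜 (-p))
    -- the twisted product ⋆ (twist by Θ/2): a ⋆ b = e^{πi⟨Θ(p),q⟩} a b on homogeneous elements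
    (P : A →ₗ[ℂ] A →ₗ[ℂ] A)
    (hP : ∀ (p q : Fin n → ℤ), ∀ a ∈ 𝒜 p, ∀ b ∈ 𝒜 q,
      P a b = Complex.exp (Real.pi * Complex.I * (pairTheta Θ p q : ℂ)) • (a * b))
    -- the generators
    (a : Fin n → A)
    (hadeg : ∀ i, a i ∈ 𝒜 (deltaVec i))
    (haCAR : ∀ i, star (a i) * a i + a i * star (a i) = 1)
    (hacomm : ∀ i j, i ≠ j → a i * a j = a j * a i)
    (hascomm : ∀ i j, i ≠ j → star (a i) * a j = a j * star (a i)) :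
    (∀ i, P (star (a i)) (a i) + P (a i) (star (a i)) = 1) ∧
    (∀ i j, i ≠ j → P (star (a i)) (a j) =
      Complex.exp (2 * Real.pi * Complex.I * (Θ i j : ℂ)) • P (a j) (star (a i))) ∧
    (∀ i j, i ≠ j → P (a i) (a j) =
      Complex.exp (-(2 * Real.pi * Complex.I * (Θ i j : ℂ))) • P (a j) (a i)) := by
  have hskew : ∀ i j, Θ j i = -Θ i j := fun i j => by
    have := congrFun (congrFun hΘ i) j
    simpa [Matrix.transpose_apply] using this
  have hdiag : ∀ i, Θ i i = 0 := fun i => by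
    have := hskew i i; linarith
  refine ⟨?_, ?_, ?_⟩
  · intro i
    rw [hP _ _ _ (hgstar _ _ (hadeg i)) _ (hadeg i),
      hP _ _ _ (hadeg i) _ (hgstar _ _ (hadeg i)), pT_nd, pT_dn, hdiag]
    simp [haCAR i]
  · intro i j hij
    rw [hP _ _ _ (hgstar _ _ (hadeg i)) _ (hadeg j),
      hP _ _ _ (hadeg j) _ (hgstar _ _ (hadeg i)), pT_nd, pT_dn,
      hascomm i j hij, smul_smul, ← Complex.exp_add]
    congr 2
    push_cast [hskew j i]
    ring
  · intro i j hij
    rw [hP _ _ _ (hadeg i) _ (hadeg j), hP _ _ _ (hadeg j) _ (hadeg i),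
      pT_dd, pT_dd, hacomm i j hij, smul_smul, ← Complex.exp_add]
    congr 2
    push_cast [hskew j i]
    ring
end
end

section
/- Let (x₁, z₁), (x₂, z₂) ∈ [0, 1/2] × 𝕋, and for j = 1, 2 set π_j = z_j · [[0, √(x_j)], [√(1−x_j), 0]] ∈ M₂(ℂ). Suppose that it is not the case that (x₁ = x₂ and z₂ = ±z₁), and not the case that x₁ = x₂ = 0. Then the only matrix C ∈ M₂(ℂ) satisfying C π₂ = π₁ C and C π₂* = π₁* C is C = 0. (That is, the representations π_{x₁,z₁} and π_{x₂,z₂} of the CAR relation a*a + aa* = 1 are disjoint.) -/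
open Complex Matrix

noncomputable section

/-- The 2-dimensional CAR representation matrix `π_{x,z}(a) = z·[[0,√x],[√(1−x),0]]`. -/
def piMat (x : ℝ) (z : ℂ) : Matrix (Fin 2) (Fin 2) ℂ :=
  z • !![0, (Real.sqrt x : ℂ); (Real.sqrt (1 - x) : ℂ), 0]

theorem stmt13 (x₁ x₂ : ℝ) (hx₁ : x₁ ∈ Set.Icc (0:ℝ) (1/2)) (hx₂ : x₂ ∈ Set.Icc (0:ℝ) (1/2))
    (z₁ z₂ : ℂ) (hz₁ : ‖z₁‖ = 1) (hz₂ : ‖z₂‖ = 1)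
    (hsep : ¬(x₁ = x₂ ∧ (z₂ = z₁ ∨ z₂ = -z₁)))
    (hzero : ¬(x₁ = 0 ∧ x₂ = 0))
    (C : Matrix (Fin 2) (Fin 2) ℂ)
    (h1 : C * piMat x₂ z₂ = piMat x₁ z₁ * C)
    (h2 : C * star (piMat x₂ z₂) = star (piMat x₁ z₁) * C) :
    C = 0 := by
  obtain ⟨hx₁0, hx₁2⟩ := hx₁
  obtain ⟨hx₂0, hx₂2⟩ := hx₂
  have eq1 := congrFun (congrFun h1 0) 0
  have eq2 := congrFun (congrFun h1 0) 1
  have eq3 := congrFun (congrFun h1 1) 0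
  have eq4 := congrFun (congrFun h1 1) 1
  have eq5 := congrFun (congrFun h2 0) 0
  have eq6 := congrFun (congrFun h2 0) 1
  have eq7 := congrFun (congrFun h2 1) 0
  have eq8 := congrFun (congrFun h2 1) 1
  simp [piMat, Matrix.mul_apply, Fin.sum_univ_two] at eq1 eq2 eq3 eq4 eq5 eq6 eq7 eq8
  have hz₁0 : z₁ ≠ 0 := by intro h; rw [h] at hz₁; norm_num at hz₁
  have hz₂0 : z₂ ≠ 0 := by intro h; rw [h] at hz₂; norm_num at hz₂
  have u₁ : z₁ * (starRingEnd ℂ) z₁ = 1 := by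
    rw [Complex.mul_conj, Complex.normSq_eq_norm_sq, hz₁]; norm_num
  have u₂ : z₂ * (starRingEnd ℂ) z₂ = 1 := by
    rw [Complex.mul_conj, Complex.normSq_eq_norm_sq, hz₂]; norm_num
  have hw₂0 : (starRingEnd ℂ) z₂ ≠ 0 := by
    intro h; rw [h, mul_zero] at u₂; exact one_ne_zero u₂.symm
  have hb₁0 : (Real.sqrt (1 - x₁) : ℂ) ≠ 0 :=
    Complex.ofReal_ne_zero.mpr (Real.sqrt_ne_zero'.mpr (by linarith))
  have hb₂0 : (Real.sqrt (1 - x₂) : ℂ) ≠ 0 :=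
    Complex.ofReal_ne_zero.mpr (Real.sqrt_ne_zero'.mpr (by linarith))
  have hsa₁ : ((Real.sqrt x₁ : ℂ))^2 = (x₁ : ℂ) := by
    rw [← Complex.ofReal_pow, Real.sq_sqrt hx₁0]
  have hsa₂ : ((Real.sqrt x₂ : ℂ))^2 = (x₂ : ℂ) := by
    rw [← Complex.ofReal_pow, Real.sq_sqrt hx₂0]
  have hsb₂ : ((Real.sqrt (1 - x₂) : ℂ))^2 = ((1 - x₂ : ℝ) : ℂ) := by
    rw [← Complex.ofReal_pow, Real.sq_sqrt (by linarith)]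
  -- main step: products of diagonal / off-diagonal entries vanish
  have hd : C 0 0 * C 1 1 = 0 ∧ C 0 1 * C 1 0 = 0 := by
    by_cases hx : x₁ = x₂
    · -- equal x case: use that z₂² ≠ z₁²
      rw [← hx] at eq1 eq2 eq3 eq4
      have hx0 : x₁ ≠ 0 := fun h => hzero ⟨h, hx ▸ h⟩
      have ha0 : (Real.sqrt x₁ : ℂ) ≠ 0 :=
        Complex.ofReal_ne_zero.mpr (Real.sqrt_ne_zero'.mpr (lt_of_le_of_ne hx₁0 (Ne.symm hx0)))
      have hznot : ¬(z₂ = z₁ ∨ z₂ = -z₁) := fun o => hsep ⟨hx, o⟩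
      push_neg at hznot
      have hzz : z₂^2 - z₁^2 ≠ 0 := by
        intro h
        have hm := mul_eq_zero.mp (show (z₂ - z₁) * (z₂ + z₁) = 0 by linear_combination h)
        rcases hm with h' | h'
        · exact hznot.1 (by linear_combination h')
        · exact hznot.2 (by linear_combination h')
      constructor
      · have key : (z₂^2 - z₁^2) * ((Real.sqrt x₁ : ℂ) * (Real.sqrt (1 - x₁) : ℂ) *
            (C 0 0 * C 1 1)) = 0 := by
          have m := congrArg₂ (fun p q : ℂ => p * q) eq2 eq3
          linear_combination m
        exact ((mul_eq_zero.mp ((mul_eq_zero.mp key).resolve_left hzz)).resolve_left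
          (mul_ne_zero ha0 hb₁0))
      · have key : (z₂^2 - z₁^2) * ((Real.sqrt x₁ : ℂ) * (Real.sqrt (1 - x₁) : ℂ) *
            (C 0 1 * C 1 0)) = 0 := by
          have m := congrArg₂ (fun p q : ℂ => p * q) eq1 eq4
          linear_combination m
        exact ((mul_eq_zero.mp ((mul_eq_zero.mp key).resolve_left hzz)).resolve_left
          (mul_ne_zero ha0 hb₁0))
    · -- distinct x case
      constructor
      · have key : (((Real.sqrt x₂ : ℂ))^2 - ((Real.sqrt x₁ : ℂ))^2) * (C 0 0 * C 1 1) = 0 := by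
          have m := congrArg₂ (fun p q : ℂ => p * q) eq2 eq7
          linear_combination m - ((Real.sqrt x₂ : ℂ)^2 * (C 0 0 * C 1 1)) * u₂
            + ((Real.sqrt x₁ : ℂ)^2 * (C 0 0 * C 1 1)) * u₁
        rw [hsa₂, hsa₁] at key
        have hne : ((x₂ : ℂ) - (x₁ : ℂ)) ≠ 0 := by
          rw [sub_ne_zero]
          exact_mod_cast Ne.symm hx
        exact (mul_eq_zero.mp key).resolve_left hne
      · have key : (((Real.sqrt (1 - x₂) : ℂ))^2 - ((Real.sqrt x₁ : ℂ))^2) *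
            (C 0 1 * C 1 0) = 0 := by
          have m := congrArg₂ (fun p q : ℂ => p * q) eq1 eq8
          linear_combination m - ((Real.sqrt (1 - x₂) : ℂ)^2 * (C 0 1 * C 1 0)) * u₂
            + ((Real.sqrt x₁ : ℂ)^2 * (C 0 1 * C 1 0)) * u₁
        rw [hsb₂, hsa₁] at key
        have hr : (1 - x₂ : ℝ) - x₁ ≠ 0 := by
          rcases lt_or_eq_of_le hx₁2 with h | h
          · intro h'; linarith
          · have h2 : x₂ < 1/2 := lt_of_le_of_ne hx₂2 (fun h' => hx (h.trans h'.symm))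
            intro h'; linarith
        have hne : (((1 - x₂ : ℝ) : ℂ) - (x₁ : ℂ)) ≠ 0 := by
          rw [sub_ne_zero]
          intro h
          exact hr (by linarith [Complex.ofReal_inj.mp h])
        exact (mul_eq_zero.mp key).resolve_left hne
  -- propagate to all four entries
  have h0011 : C 0 0 = 0 ∧ C 1 1 = 0 := by
    rcases mul_eq_zero.mp hd.1 with h | h
    · refine ⟨h, ?_⟩
      have h' := eq3
      rw [h, mul_zero] at h'
      exact (mul_eq_zero.mp h').resolve_right (mul_ne_zero hz₂0 hb₂0)
    · refine ⟨?_, h⟩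
      have h' := eq6
      rw [h, mul_zero] at h'
      exact (mul_eq_zero.mp h').resolve_right (mul_ne_zero hw₂0 hb₂0)
  have h0110 : C 0 1 = 0 ∧ C 1 0 = 0 := by
    rcases mul_eq_zero.mp hd.2 with h | h
    · refine ⟨h, ?_⟩
      have h' := eq8
      rw [h, mul_zero] at h'
      exact (mul_eq_zero.mp h').resolve_right (mul_ne_zero hw₂0 hb₂0)
    · refine ⟨?_, h⟩
      have h' := eq1
      rw [h, mul_zero] at h'
      exact (mul_eq_zero.mp h').resolve_right (mul_ne_zero hz₂0 hb₂0)
  ext i j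
  fin_cases i <;> fin_cases j <;>
    simp [h0011.1, h0011.2, h0110.1, h0110.2]
end
end
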